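/- Let A ∈ ℂ with 0 < |A| < π. Then (i) for every nonzero integer n and every real s, |e^{is} + 2πi n / A| ≥ 2π/|A| − 1, and there exist a nonzero integer n and a real s attaining equality; and (ii) if t ∈ ℂ with Re t ∈ [−π, π) and |Im t| < log(2π/|A| − 1), and s ∈ [−π, π) is real, then exp(A e^{it}) = exp(A e^{is}) implies t = s. -/

import Mathlib

open Complex Real

/-- For the transcendental-curve parametrization `q(z) = exp(A e^{iz})` with `0 < |A| < π`:
(i) `|e^{is} + 2πin/A| ≥ 2π/|A| - 1` for every nonzero integer `n` and every real `s`,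
with equality attained for some nonzero `n` and some real `s`;
(ii) the injectivity condition (G) holds on the strip `|Im z| < log(2π/|A| - 1)`. -/
theorem transcendental_param_grauert (A : ℂ) (hA₀ : 0 < ‖A‖)
    (hA₁ : ‖A‖ < π) :
    ((∀ n : ℤ, n ≠ 0 → ∀ s : ℝ,
        2 * π / ‖A‖ - 1
          ≤ ‖Complex.exp (Complex.I * (s : ℂ)) + 2 * (π : ℂ) * Complex.I * (n : ℂ) / A‖)
      ∧ (∃ n : ℤ, n ≠ 0 ∧ ∃ s : ℝ,
          ‖Complex.exp (Complex.I * (s : ℂ)) + 2 * (π : ℂ) * Complex.I * (n : ℂ) / A‖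
            = 2 * π / ‖A‖ - 1))
    ∧ (∀ t : ℂ, -π ≤ t.re → t.re < π →
        |t.im| < Real.log (2 * π / ‖A‖ - 1) →
        ∀ s : ℝ, -π ≤ s → s < π →
          Complex.exp (A * Complex.exp (Complex.I * t))
            = Complex.exp (A * Complex.exp (Complex.I * (s : ℂ))) →
          t = (s : ℂ)) := by
  have hπ := Real.pi_pos
  have hA : A ≠ 0 := by
    intro h; rw [h] at hA₀; simp at hA₀
  have hr2 : (2:ℝ) < 2 * π / ‖A‖ := by
    rw [lt_div_iff₀ hA₀]; nlinarith
  have hr1 : (1:ℝ) < 2 * π / ‖A‖ - 1 := by linarith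
  have key : ∀ n : ℤ, n ≠ 0 → ∀ s : ℝ,
      2 * π / ‖A‖ - 1
        ≤ ‖Complex.exp (Complex.I * (s : ℂ)) + 2 * (π : ℂ) * Complex.I * (n : ℂ) / A‖ := by
    intro n hn s
    have h1 : ‖Complex.exp (Complex.I * (s:ℂ))‖ = 1 := by
      rw [Complex.norm_exp]
      simp [Complex.mul_re]
    have hn1 : (1:ℝ) ≤ |(n:ℝ)| := by
      have := Int.one_le_abs hn
      calc (1:ℝ) ≤ ((|n| : ℤ) : ℝ) := by exact_mod_cast this
        _ = |(n:ℝ)| := by push_cast; ring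
    have h2 : ‖2 * (π:ℂ) * Complex.I * (n:ℂ) / A‖ = 2 * π * |(n:ℝ)| / ‖A‖ := by
      rw [norm_div]
      simp [abs_of_pos hπ]
    have h3 : 2 * π / ‖A‖ ≤ ‖2 * (π:ℂ) * Complex.I * (n:ℂ) / A‖ := by
      rw [h2]
      have : 2 * π ≤ 2 * π * |(n:ℝ)| := by nlinarith
      exact (div_le_div_iff_of_pos_right hA₀).mpr this
    have h4 : ‖2 * (π:ℂ) * Complex.I * (n:ℂ) / A‖
        - ‖Complex.exp (Complex.I * (s:ℂ))‖
        ≤ ‖Complex.exp (Complex.I * (s:ℂ)) + 2 * (π:ℂ) * Complex.I * (n:ℂ) / A‖ := by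
      have := norm_sub_norm_le (2 * (π:ℂ) * Complex.I * (n:ℂ) / A)
        (-(Complex.exp (Complex.I * (s:ℂ))))
      simp only [norm_neg, sub_neg_eq_add] at this
      calc _ ≤ ‖2 * (π:ℂ) * Complex.I * (n:ℂ) / A
              + Complex.exp (Complex.I * (s:ℂ))‖ := by simpa using this
        _ = _ := by rw [add_comm]
    rw [h1] at h4
    linarith
  refine ⟨⟨key, ?_⟩, ?_⟩
  · -- equality witness
    set c : ℂ := 2 * (π:ℂ) * Complex.I / A with hc
    have hcabs : ‖c‖ = 2 * π / ‖A‖ := by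
      rw [hc, norm_div]
      simp [abs_of_pos hπ]
    have hcpos : 0 < ‖c‖ := by rw [hcabs]; linarith
    have hcne : c ≠ 0 := by
      intro h; rw [h] at hcpos; simp at hcpos
    refine ⟨1, one_ne_zero, Complex.arg (-c), ?_⟩
    have he : Complex.exp (Complex.I * (Complex.arg (-c) : ℂ)) = -c / (‖c‖ : ℂ) := by
      have h := Complex.norm_mul_exp_arg_mul_I (-c)
      rw [norm_neg] at h
      rw [mul_comm, eq_div_iff (show ((‖c‖ : ℝ) : ℂ) ≠ 0 from by exact_mod_cast hcpos.ne'),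
        mul_comm]
      exact h
    have hc1 : 2 * (π:ℂ) * Complex.I * ((1:ℤ):ℂ) / A = c := by
      rw [hc]; push_cast; ring
    have hrne : ((‖c‖ : ℝ) : ℂ) ≠ 0 := by exact_mod_cast hcpos.ne'
    have harg : Complex.exp (Complex.I * (Complex.arg (-c) : ℂ)) + 2 * (π:ℂ) * Complex.I * ((1:ℤ):ℂ) / A
        = c * (1 - ((‖c‖ : ℝ) : ℂ)⁻¹) := by
      rw [he, hc1, div_eq_mul_inv]
      ring
    rw [harg, norm_mul]
    have h5 : ‖1 - ((‖c‖ : ℝ) : ℂ)⁻¹‖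
        = 1 - (‖c‖)⁻¹ := by
      rw [show (1 : ℂ) - ((‖c‖ : ℝ) : ℂ)⁻¹ = (((1 - (‖c‖)⁻¹ : ℝ)) : ℂ) by
        push_cast; ring]
      rw [Complex.norm_real, Real.norm_eq_abs, _root_.abs_of_nonneg]
      have : (‖c‖)⁻¹ < 1 := by
        rw [inv_lt_one_iff₀]; right; rw [hcabs]; linarith
      linarith
    rw [h5, hcabs]
    have hane : ‖A‖ ≠ 0 := hA₀.ne'
    field_simp
  · -- injectivity
    intro t ht1 ht2 htim s hs1 hs2 hexp
    rw [Complex.exp_eq_exp_iff_exists_int] at hexp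
    obtain ⟨k, hk⟩ := hexp
    by_cases hk0 : k = 0
    · subst hk0
      simp only [Int.cast_zero, zero_mul, add_zero] at hk
      have h2 : Complex.exp (Complex.I * t) = Complex.exp (Complex.I * (s:ℂ)) :=
        mul_left_cancel₀ hA hk
      rw [Complex.exp_eq_exp_iff_exists_int] at h2
      obtain ⟨m, hm⟩ := h2
      have ht : t = (s:ℂ) + (m:ℂ) * (2 * π) := by
        apply mul_left_cancel₀ Complex.I_ne_zero
        rw [hm]; ring
      have htre : t.re = s + m * (2 * π) := by
        rw [ht]; simp
      have htim0 : t.im = 0 := by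
        rw [ht]; simp
      have hm0 : m = 0 := by
        rcases lt_trichotomy m 0 with h | h | h
        · exfalso
          have hm1 : (m:ℝ) ≤ -1 := by exact_mod_cast Int.le_sub_one_of_lt h
          nlinarith
        · exact h
        · exfalso
          have hm1 : (1:ℝ) ≤ (m:ℝ) := by exact_mod_cast h
          nlinarith
      rw [hm0] at ht
      simpa using ht
    · exfalso
      have he : Complex.exp (Complex.I * t)
          = Complex.exp (Complex.I * (s:ℂ)) + 2 * (π:ℂ) * Complex.I * (k:ℂ) / A := by
        field_simp
        linear_combination hk
      have hb := key k hk0 s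
      rw [← he] at hb
      have habs : ‖Complex.exp (Complex.I * t)‖ = Real.exp (-t.im) := by
        rw [Complex.norm_exp]
        congr 1
        simp [Complex.mul_re]
      have hlt : Real.exp (-t.im) < 2 * π / ‖A‖ - 1 := by
        calc Real.exp (-t.im) ≤ Real.exp |t.im| :=
              Real.exp_le_exp.mpr (neg_le_abs _)
          _ < Real.exp (Real.log (2 * π / ‖A‖ - 1)) :=
              Real.exp_lt_exp.mpr htim
          _ = 2 * π / ‖A‖ - 1 := Real.exp_log (by linarith)
      rw [habs] at hb
      linarith
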